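/- Sherman–Morrison update for fixing one more node (the paper's equation (5)): let U ⊆ Fin n be a finite set, i ∉ U, M_U and M_{U∪{i}} the row-fixed matrices, Q = M_U⁻¹ and Q' = M_{U∪{i}}⁻¹. Then for all j, k : Fin n, Q' j k = Q j k + Q j i · ((if i = k then 1 else 0) - Q i k) / (Q i i). -/

import Mathlib

open Matrix

/-- Row-fixed matrices built from the dominant Laplacian are strictly diagonally
dominant, hence have nonzero determinant. -/
lemma rowfix_det_ne_zero {n : ℕ} (A L : Matrix (Fin n) (Fin n) ℝ)
    (hL : L = Matrix.diagonal (fun i => ∑ j, |A i j|) - A)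
    (V : Finset (Fin n)) (M : Matrix (Fin n) (Fin n) ℝ)
    (hM : ∀ j k, M j k = if j ∈ V then (if j = k then 1 else 0) else (L + 1) j k) :
    M.det ≠ 0 := by
  apply det_ne_zero_of_sum_row_lt_diag
  intro k
  by_cases hk : k ∈ V
  · have h0 : ∑ j ∈ Finset.univ.erase k, ‖M k j‖ = 0 := by
      apply Finset.sum_eq_zero
      intro j hj
      have hjk : j ≠ k := (Finset.mem_erase.mp hj).1
      simp [hM, hk, hjk.symm]
    rw [h0, hM, if_pos hk, if_pos rfl]
    norm_num
  · have hdiag : M k k = (∑ j, |A k j|) - A k k + 1 := by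
      simp [hM, hk, hL, Matrix.add_apply, Matrix.sub_apply, Matrix.one_apply,
        Matrix.diagonal_apply_eq]
    have hoff : ∀ j, j ≠ k → M k j = -A k j := by
      intro j hj
      simp [hM, hk, hL, Matrix.add_apply, Matrix.sub_apply, Matrix.one_apply,
        Matrix.diagonal_apply_ne' _ hj, (Ne.symm hj : k ≠ j)]
    have hsum : ∑ j ∈ Finset.univ.erase k, ‖M k j‖ = ∑ j ∈ Finset.univ.erase k, |A k j| := by
      apply Finset.sum_congr rfl
      intro j hj
      rw [hoff j (Finset.mem_erase.mp hj).1, Real.norm_eq_abs, abs_neg]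
    have hsplit : (∑ j, |A k j|) = |A k k| + ∑ j ∈ Finset.univ.erase k, |A k j| := by
      rw [← Finset.add_sum_erase _ _ (Finset.mem_univ k)]
    have hpos : (0:ℝ) < M k k := by
      rw [hdiag, hsplit]
      have := abs_nonneg (A k k)
      have := le_abs_self (A k k)
      have : (0:ℝ) ≤ ∑ j ∈ Finset.univ.erase k, |A k j| :=
        Finset.sum_nonneg fun j _ => abs_nonneg _
      nlinarith [le_abs_self (A k k)]
    rw [hsum, Real.norm_eq_abs, abs_of_pos hpos, hdiag, hsplit]
    nlinarith [le_abs_self (A k k)]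

/-- Sherman–Morrison update for fixing one more node (the paper's equation (5)):
if `Q = M_U⁻¹` and `Q' = M_{U ∪ {i}}⁻¹` with `i ∉ U`, then
`Q' j k = Q j k + Q j i * ([i = k] - Q i k) / Q i i`. -/
theorem sherman_morrison_fix_one_more
    (n : ℕ) (A : Matrix (Fin n) (Fin n) ℝ)
    (L : Matrix (Fin n) (Fin n) ℝ)
    (hL : L = Matrix.diagonal (fun i => ∑ j, |A i j|) - A)
    (U : Finset (Fin n)) (i : Fin n) (hi : i ∉ U)
    (M M' : Matrix (Fin n) (Fin n) ℝ)
    (hM : ∀ j k, M j k = if j ∈ U then (if j = k then 1 else 0) else (L + 1) j k)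
    (hM' : ∀ j k, M' j k =
      if j ∈ insert i U then (if j = k then 1 else 0) else (L + 1) j k)
    (Q Q' : Matrix (Fin n) (Fin n) ℝ)
    (hQ : Q = M⁻¹) (hQ' : Q' = M'⁻¹) :
    ∀ j k, Q' j k = Q j k + Q j i * ((if i = k then 1 else 0) - Q i k) / Q i i := by
  have hdet : M.det ≠ 0 := rowfix_det_ne_zero A L hL U M hM
  have hdet' : M'.det ≠ 0 := rowfix_det_ne_zero A L hL (insert i U) M' hM'
  have hMQ : M * Q = 1 := by
    rw [hQ]; exact Matrix.mul_nonsing_inv M (isUnit_iff_ne_zero.mpr hdet)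
  -- `M'` is `M` with row `i` replaced by the `i`-th standard basis row.
  have hupd : M.updateRow i (Pi.single i 1) = M' := by
    ext j k
    rw [Matrix.updateRow_apply, hM' j k, hM j k]
    by_cases hji : j = i
    · subst hji
      simp [Pi.single_apply, eq_comm]
    · simp [hji, Finset.mem_insert]
  have hQii : Q i i ≠ 0 := by
    have : Q i i = M.det⁻¹ * M'.det := by
      rw [hQ, Matrix.inv_def, Matrix.smul_apply, smul_eq_mul, Matrix.adjugate_apply,
        Ring.inverse_eq_inv, hupd]
    rw [this]
    exact mul_ne_zero (inv_ne_zero hdet) hdet'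
  set R : Matrix (Fin n) (Fin n) ℝ :=
    Matrix.of fun j k => Q j k + Q j i * ((if i = k then 1 else 0) - Q i k) / Q i i with hR
  have hQrow : ∀ j, j ∈ U → ∀ k, Q j k = if j = k then 1 else 0 := by
    intro j hj k
    have := congrFun (congrFun hMQ j) k
    rw [Matrix.mul_apply] at this
    have hrow : ∀ l, M j l * Q l k = (if j = l then 1 else 0) * Q l k := by
      intro l; rw [hM, if_pos hj]
    simp_rw [hrow, ite_mul, one_mul, zero_mul] at this
    rw [Finset.sum_ite_eq, if_pos (Finset.mem_univ j)] at this
    rw [this, Matrix.one_apply]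
  have hMR : M' * R = 1 := by
    ext j k
    rw [Matrix.mul_apply]
    by_cases hj : j ∈ insert i U
    · have hrow : ∀ l, M' j l * R l k = (if j = l then 1 else 0) * R l k := by
        intro l; rw [hM', if_pos hj]
      simp_rw [hrow, ite_mul, one_mul, zero_mul]
      rw [Finset.sum_ite_eq, if_pos (Finset.mem_univ j)]
      rcases Finset.mem_insert.mp hj with hji | hjU
      · subst hji
        rw [hR]
        simp only [Matrix.of_apply, Matrix.one_apply]
        field_simp
        ring
      · have hji : j ≠ i := fun h => hi (h ▸ hjU)
        rw [hR]
        simp only [Matrix.of_apply, Matrix.one_apply]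
        rw [hQrow j hjU k, hQrow j hjU i, if_neg hji]
        simp
    · have hji : j ≠ i := fun h => hj (h ▸ Finset.mem_insert_self i U)
      have hjU : j ∉ U := fun h => hj (Finset.mem_insert_of_mem h)
      have hrow : ∀ l, M' j l = M j l := by
        intro l; rw [hM', hM, if_neg hj, if_neg hjU]
      have hMQjk := congrFun (congrFun hMQ j) k
      have hMQji := congrFun (congrFun hMQ j) i
      rw [Matrix.mul_apply] at hMQjk hMQji
      simp_rw [hrow, hR, Matrix.of_apply, mul_add, Finset.sum_add_distrib]
      rw [hMQjk]
      have : ∑ l, M j l * (Q l i * ((if i = k then 1 else 0) - Q i k) / Q i i)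
          = (∑ l, M j l * Q l i) * (((if i = k then 1 else 0) - Q i k) / Q i i) := by
        rw [Finset.sum_mul]
        apply Finset.sum_congr rfl
        intro l _
        ring
      rw [this, hMQji]
      simp [Matrix.one_apply, hji]
  have hQ'R : Q' = R := by
    rw [hQ']
    exact Matrix.inv_eq_right_inv hMR
  intro j k
  rw [hQ'R, hR]
  rfl
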